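/- Let Z_1,...,Z_t be i.i.d. random variables taking values in a set S, let A, B be disjoint events with p = P(Z_1 ∈ A), q = P(Z_1 ∈ B), and suppose q > p ≥ 0. Then P(∑_{i=1}^t 1_{Z_i∈A} ≥ ∑_{i=1}^t 1_{Z_i∈B}) ≤ (1 - (√q - √p)²)^t. -/

import Mathlib

open MeasureTheory ProbabilityTheory Real Finset

/-- Chernoff bound for counts: if `Z₁,…,Z_t` are i.i.d. `S`-valued random variables,
`A, B` disjoint measurable sets with `p = P(Z₁ ∈ A)`, `q = P(Z₁ ∈ B)` and `q > p ≥ 0`,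
then `P(∑ 1_{Zᵢ∈A} ≥ ∑ 1_{Zᵢ∈B}) ≤ (1 - (√q - √p)²)^t`. -/
theorem stmt_0 {Ω S : Type*} [MeasurableSpace Ω] [MeasurableSpace S]
    (μ : Measure Ω) [IsProbabilityMeasure μ] (t : ℕ) (Z : Fin t → Ω → S)
    (hmeas : ∀ i, Measurable (Z i))
    (hindep : iIndepFun Z μ)
    (hident : ∀ i j, Measure.map (Z i) μ = Measure.map (Z j) μ)
    (A B : Set S) (hA : MeasurableSet A) (hB : MeasurableSet B)
    (hdisj : Disjoint A B) (p q : ℝ)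
    (hp : ∀ i, p = (μ {ω | Z i ω ∈ A}).toReal)
    (hq : ∀ i, q = (μ {ω | Z i ω ∈ B}).toReal)
    (hpq : p < q) (hp0 : 0 ≤ p) :
    (μ {ω | (∑ i : Fin t, A.indicator (fun _ => (1 : ℝ)) (Z i ω))
          ≥ ∑ i : Fin t, B.indicator (fun _ => (1 : ℝ)) (Z i ω)}).toReal
      ≤ (1 - (sqrt q - sqrt p) ^ 2) ^ t := by
  have hq0 : 0 ≤ q := hp0.trans hpq.le
  set f : S → ℝ := fun s =>
    A.indicator (fun _ => (1:ℝ)) s - B.indicator (fun _ => (1:ℝ)) s with hfdef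
  have hfmeas : Measurable f :=
    (measurable_const.indicator hA).sub (measurable_const.indicator hB)
  set X : Fin t → Ω → ℝ := fun i ω => f (Z i ω) with hXdef
  have hXmeas : ∀ i, Measurable (X i) := fun i => hfmeas.comp (hmeas i)
  have hXindep : iIndepFun X μ :=
    hindep.comp (fun _ => f) (fun _ => hfmeas)
  have hfbound : ∀ s, |f s| ≤ 1 := by
    intro s
    simp only [hfdef, Set.indicator]
    by_cases hsA : s ∈ A <;> by_cases hsB : s ∈ B <;> simp [hsA, hsB] <;> norm_num
  -- pointwise identity on S
  have hfexp : ∀ (β : ℝ) (s : S), exp (β * f s)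
      = 1 + A.indicator (fun _ => exp β - 1) s + B.indicator (fun _ => exp (-β) - 1) s := by
    intro β s
    by_cases hsA : s ∈ A
    · have hsB : s ∉ B := fun h => (hdisj.le_bot ⟨hsA, h⟩).elim
      simp [hfdef, Set.indicator_of_mem hsA, Set.indicator_of_notMem hsB]
    · by_cases hsB : s ∈ B
      · simp [hfdef, Set.indicator_of_mem hsB, Set.indicator_of_notMem hsA]
      · simp [hfdef, Set.indicator_of_notMem hsA, Set.indicator_of_notMem hsB]
  -- mgf of each X i
  have hmgf : ∀ (i : Fin t) (β : ℝ),
      mgf (X i) μ β = 1 + (exp β - 1) * p + (exp (-β) - 1) * q := by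
    intro i β
    have hZae : AEMeasurable (Z i) μ := (hmeas i).aemeasurable
    have : mgf (X i) μ β = ∫ s, exp (β * f s) ∂(Measure.map (Z i) μ) :=
      (integral_map hZae ((hfmeas.const_mul β).exp).aestronglyMeasurable).symm
    rw [this]
    have h1 : ∫ s, exp (β * f s) ∂(Measure.map (Z i) μ)
        = ∫ s, (1 + A.indicator (fun _ => exp β - 1) s
            + B.indicator (fun _ => exp (-β) - 1) s) ∂(Measure.map (Z i) μ) := by
      exact integral_congr_ae (Filter.Eventually.of_forall (fun s => hfexp β s))
    have hPμ : IsProbabilityMeasure (Measure.map (Z i) μ) :=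
      Measure.isProbabilityMeasure_map hZae
    have hintA : Integrable (A.indicator (fun _ => exp β - 1)) (Measure.map (Z i) μ) :=
      (integrable_const _).indicator hA
    have hintB : Integrable (B.indicator (fun _ => exp (-β) - 1)) (Measure.map (Z i) μ) :=
      (integrable_const _).indicator hB
    have hI1 : Integrable (fun s => 1 + A.indicator (fun _ => exp β - 1) s)
        (Measure.map (Z i) μ) := (integrable_const 1).add hintA
    rw [h1, integral_add hI1 hintB, integral_add (integrable_const 1) hintA, integral_const,
      integral_indicator_const _ hA, integral_indicator_const _ hB]
    have hpA : (Measure.map (Z i) μ) A = μ {ω | Z i ω ∈ A} := by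
      rw [Measure.map_apply (hmeas i) hA]; rfl
    have hqB : (Measure.map (Z i) μ) B = μ {ω | Z i ω ∈ B} := by
      rw [Measure.map_apply (hmeas i) hB]; rfl
    simp only [measureReal_def]
    rw [hpA, hqB, ← hp i, ← hq i]
    simp [measure_univ, mul_comm]
  -- event rewriting
  have hev : {ω | (∑ i : Fin t, A.indicator (fun _ => (1 : ℝ)) (Z i ω))
          ≥ ∑ i : Fin t, B.indicator (fun _ => (1 : ℝ)) (Z i ω)}
      = {ω | (0:ℝ) ≤ (∑ i : Fin t, X i) ω} := by
    ext ω
    simp only [Set.mem_setOf_eq, ge_iff_le, Finset.sum_apply, hXdef, hfdef,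
      Finset.sum_sub_distrib, sub_nonneg]
  -- key bound for all β ≥ 0
  have key : ∀ β : ℝ, 0 ≤ β →
      (μ {ω | (∑ i : Fin t, A.indicator (fun _ => (1 : ℝ)) (Z i ω))
          ≥ ∑ i : Fin t, B.indicator (fun _ => (1 : ℝ)) (Z i ω)}).toReal
        ≤ (1 + (exp β - 1) * p + (exp (-β) - 1) * q) ^ t := by
    intro β hβ
    have hSeq : (∑ i : Fin t, X i) = fun ω => ∑ i : Fin t, X i ω := by
      ext ω; simp
    have hSmeas : Measurable (∑ i : Fin t, X i) := by
      rw [hSeq]; exact Finset.measurable_sum _ fun i _ => hXmeas i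
    have hint : Integrable (fun ω => exp (β * (∑ i : Fin t, X i) ω)) μ := by
      refine Integrable.mono' (integrable_const (exp (|β| * t)))
        ((hSmeas.const_mul β).exp).aestronglyMeasurable
        (Filter.Eventually.of_forall fun ω => ?_)
      rw [Real.norm_eq_abs, abs_exp]
      apply exp_le_exp.2
      calc β * (∑ i : Fin t, X i) ω ≤ |β * (∑ i : Fin t, X i) ω| := le_abs_self _
        _ = |β| * |(∑ i : Fin t, X i) ω| := abs_mul _ _
        _ ≤ |β| * t := by
            refine mul_le_mul_of_nonneg_left ?_ (abs_nonneg _)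
            rw [Finset.sum_apply]
            calc |∑ i : Fin t, X i ω| ≤ ∑ i : Fin t, |X i ω| := Finset.abs_sum_le_sum_abs _ _
              _ ≤ ∑ _i : Fin t, (1:ℝ) := Finset.sum_le_sum fun i _ => hfbound _
              _ = t := by simp
    have := measure_ge_le_exp_mul_mgf (μ := μ) (X := ∑ i : Fin t, X i) 0 hβ hint
    simp only [mul_zero, neg_zero, zero_mul, exp_zero, one_mul] at this
    rw [hev]
    refine this.trans ?_
    rw [hXindep.mgf_sum hXmeas Finset.univ]
    calc ∏ i : Fin t, mgf (X i) μ β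
        = ∏ _i : Fin t, (1 + (exp β - 1) * p + (exp (-β) - 1) * q) := by
          exact Finset.prod_congr rfl fun i _ => hmgf i β
      _ = (1 + (exp β - 1) * p + (exp (-β) - 1) * q) ^ t := by
          rw [Finset.prod_const, Finset.card_univ, Fintype.card_fin]
      _ ≤ (1 + (exp β - 1) * p + (exp (-β) - 1) * q) ^ t := le_rfl
  rcases hp0.eq_or_lt with hp0' | hppos
  · -- p = 0: take β → ∞
    subst hp0'
    have hrhs : (1 - (sqrt q - sqrt 0) ^ 2) ^ t = (1 - q) ^ t := by
      rw [Real.sqrt_zero, sub_zero, Real.sq_sqrt hq0]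
    rw [hrhs]
    have h1 : Filter.Tendsto (fun β : ℝ => exp (-β)) Filter.atTop (nhds 0) :=
      Real.tendsto_exp_atBot.comp Filter.tendsto_neg_atTop_atBot
    have h2 : Filter.Tendsto (fun β : ℝ => 1 + (exp β - 1) * 0 + (exp (-β) - 1) * q)
        Filter.atTop (nhds (1 - q)) := by
      have h3 := ((h1.sub (tendsto_const_nhds (x := (1:ℝ)))).mul_const q).const_add 1
      simp only [zero_sub, neg_mul, one_mul] at h3
      simpa [mul_zero, add_zero, sub_eq_add_neg] using h3
    have hten := h2.pow t
    refine ge_of_tendsto hten ?_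
    filter_upwards [Filter.eventually_ge_atTop 0] with β hβ
    exact key β hβ
  · -- p > 0
    set β := Real.log (sqrt q / sqrt p) with hβdef
    have hsp : (0:ℝ) < sqrt p := Real.sqrt_pos.2 hppos
    have hsq : (0:ℝ) < sqrt q := Real.sqrt_pos.2 (hppos.trans hpq)
    have hratio : 1 ≤ sqrt q / sqrt p := by
      rw [le_div_iff₀ hsp, one_mul]
      exact Real.sqrt_le_sqrt hpq.le
    have hβnn : 0 ≤ β := Real.log_nonneg hratio
    have hexpβ : exp β = sqrt q / sqrt p := Real.exp_log (by positivity)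
    have hexpnegβ : exp (-β) = sqrt p / sqrt q := by
      rw [Real.exp_neg, hexpβ, inv_div]
    refine (key β hβnn).trans ?_
    have hval : 1 + (exp β - 1) * p + (exp (-β) - 1) * q = 1 - (sqrt q - sqrt p) ^ 2 := by
      rw [hexpβ, hexpnegβ]
      have h1 : sqrt p ^ 2 = p := Real.sq_sqrt hp0
      have h2 : sqrt q ^ 2 = q := Real.sq_sqrt hq0
      field_simp
      nlinarith [hsp, hsq]
    rw [hval]
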